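/- arXiv:1510.00086 — 3 statements merged into one kernel-verified Lean document; each statement's English description precedes it below -/
import Mathlib

section
/- In the complete bipartite double-oral-auction mechanism, any maximal sequence of consecutive no-change buyer moves has length at most γ, the current number of matched pairs: each no-change buyer move raises the offer of some matched seller who is submitting the lowest offer, so after at most γ such moves the lowest offer strictly increases and no further no-change buyer move is possible. -/
open Finset

/-- A market: buyers `B`, sellers `S`, trading edges `E`, valuations in `[0,1]`. -/
structure Market (B S : Type*) [Fintype B] [Fintype S] where
  E : Finset (B × S)
  valB : B → ℝ
  valS : S → ℝ
  valB_nonneg : ∀ b, 0 ≤ valB b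
  valB_le_one : ∀ b, valB b ≤ 1
  valS_nonneg : ∀ s, 0 ≤ valS s
  valS_le_one : ∀ s, valS s ≤ 1

/-- A state of the market: prices submitted by buyers and sellers, and a matching. -/
structure MState (B S : Type*) where
  PB : B → ℝ
  PS : S → ℝ
  M : Finset (B × S)

variable {B S : Type*} [Fintype B] [Fintype S]

/-- `Mat` is a matching contained in the edge set. -/
def IsMatching (Mk : Market B S) (Mat : Finset (B × S)) : Prop :=
  Mat ⊆ Mk.E ∧ (∀ p ∈ Mat, ∀ q ∈ Mat, p.1 = q.1 → p = q) ∧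
    (∀ p ∈ Mat, ∀ q ∈ Mat, p.2 = q.2 → p = q)

def BMatched (st : MState B S) (b : B) : Prop := ∃ s, (b, s) ∈ st.M
def SMatched (st : MState B S) (s : S) : Prop := ∃ b, (b, s) ∈ st.M

/-- A valid state: bids below valuations, offers above opportunity costs,
and within a matched pair the bid is at least the offer. -/
def ValidState (Mk : Market B S) (st : MState B S) : Prop :=
  IsMatching Mk st.M ∧ (∀ b, st.PB b ≤ Mk.valB b) ∧ (∀ s, Mk.valS s ≤ st.PS s) ∧
    ∀ p ∈ st.M, st.PS p.2 ≤ st.PB p.1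

/-- Social welfare of a matching. -/
def SW (Mk : Market B S) (Mat : Finset (B × S)) : ℝ :=
  ∑ p ∈ Mat, (Mk.valB p.1 - Mk.valS p.2)

/-- Stable state: no bid above an offer on any edge, unmatched agents submit their
valuations, matched pairs have equal prices. -/
def IsStable (Mk : Market B S) (st : MState B S) : Prop :=
  (∀ p ∈ Mk.E, st.PB p.1 ≤ st.PS p.2) ∧
  (∀ b, ¬ BMatched st b → st.PB b = Mk.valB b) ∧
  (∀ s, ¬ SMatched st s → st.PS s = Mk.valS s) ∧
  ∀ p ∈ st.M, st.PB p.1 = st.PS p.2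

/-- ε-stable state. -/
def IsEpsStable (Mk : Market B S) (ε : ℝ) (st : MState B S) : Prop :=
  (∀ p ∈ Mk.E, st.PB p.1 - st.PS p.2 ≤ ε) ∧
  (∀ b, ¬ BMatched st b → st.PB b = Mk.valB b) ∧
  (∀ s, ¬ SMatched st s → st.PS s = Mk.valS s) ∧
  ∀ p ∈ st.M, st.PB p.1 = st.PS p.2

/-- `x` is an integer multiple of `ε`. -/
def MulEps (ε x : ℝ) : Prop := ∃ k : ℤ, x = k * ε

variable [DecidableEq B] [DecidableEq S]

/-- Seller `s` is ε-interested in buyer `b` bidding `b'`. -/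
def SellerInterested (Mk : Market B S) (ε : ℝ) (st : MState B S) (b' : ℝ) (b : B) (s : S) : Prop :=
  (b, s) ∈ Mk.E ∧ ((¬ SMatched st s ∧ st.PS s ≤ b') ∨ (SMatched st s ∧ st.PS s + ε ≤ b'))

/-- Buyer `b` is ε-interested in seller `s` offering `s'`. -/
def BuyerInterested (Mk : Market B S) (ε : ℝ) (st : MState B S) (s' : ℝ) (s : S) (b : B) : Prop :=
  (b, s) ∈ Mk.E ∧ ((¬ BMatched st b ∧ s' ≤ st.PB b) ∨ (BMatched st b ∧ s' + ε ≤ st.PB b))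

/-- Increment rule for a buyer: a new bid is at most (lowest neighbouring offer + ε) and
at most the lowest offer of an unmatched neighbouring seller. -/
def BuyIncrOK (Mk : Market B S) (ε : ℝ) (st : MState B S) (b : B) (b' : ℝ) : Prop :=
  (∀ s, (b, s) ∈ Mk.E → b' ≤ st.PS s + ε) ∧
  (∀ s, (b, s) ∈ Mk.E → ¬ SMatched st s → b' ≤ st.PS s)

/-- Increment rule for a seller. -/
def SellIncrOK (Mk : Market B S) (ε : ℝ) (st : MState B S) (s : S) (s' : ℝ) : Prop :=
  (∀ b, (b, s) ∈ Mk.E → st.PB b - ε ≤ s') ∧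
  (∀ b, (b, s) ∈ Mk.E → ¬ BMatched st b → st.PB b ≤ s')

/-- Match `b` with `s` at price `price`, displacing any previous partner of `s` (resp. `b`)
and equalizing the two submitted prices. -/
def matchPair (st : MState B S) (b : B) (s : S) (price : ℝ) : MState B S where
  PB := Function.update st.PB b price
  PS := Function.update st.PS s price
  M := insert (b, s) (st.M.filter fun p => p.1 ≠ b ∧ p.2 ≠ s)

/-- One legal move of the DOA mechanism (Mechanism 1): an arbitrary recognized unmatched
agent either submits an improving price (respecting the minimum-increment and increment
rules, when no counterpart is interested) or matches with an ε-interested counterpart,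
giving priority to unmatched counterparts. -/
inductive Step (Mk : Market B S) (ε : ℝ) : MState B S → MState B S → Prop
  | buyBid (st : MState B S) (b : B) (b' : ℝ) :
      ¬ BMatched st b → st.PB b < b' → b' ≤ Mk.valB b → MulEps ε b' →
      BuyIncrOK Mk ε st b b' →
      (∀ s, ¬ SellerInterested Mk ε st b' b s) →
      Step Mk ε st ⟨Function.update st.PB b b', st.PS, st.M⟩
  | buyMatch (st : MState B S) (b : B) (b' : ℝ) (s : S) :
      ¬ BMatched st b → st.PB b ≤ b' → b' ≤ Mk.valB b → MulEps ε b' →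
      BuyIncrOK Mk ε st b b' →
      SellerInterested Mk ε st b' b s →
      ((∃ s₀, SellerInterested Mk ε st b' b s₀ ∧ ¬ SMatched st s₀) → ¬ SMatched st s) →
      Step Mk ε st (matchPair st b s b')
  | sellOffer (st : MState B S) (s : S) (s' : ℝ) :
      ¬ SMatched st s → s' < st.PS s → Mk.valS s ≤ s' → MulEps ε s' →
      SellIncrOK Mk ε st s s' →
      (∀ b, ¬ BuyerInterested Mk ε st s' s b) →
      Step Mk ε st ⟨st.PB, Function.update st.PS s s', st.M⟩
  | sellMatch (st : MState B S) (s : S) (s' : ℝ) (b : B) :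
      ¬ SMatched st s → s' ≤ st.PS s → Mk.valS s ≤ s' → MulEps ε s' →
      SellIncrOK Mk ε st s s' →
      BuyerInterested Mk ε st s' s b →
      ((∃ b₀, BuyerInterested Mk ε st s' s b₀ ∧ ¬ BMatched st b₀) → ¬ BMatched st b) →
      Step Mk ε st (matchPair st b s s')

/-- A valid starting state: valid, bids below offers on every edge, prices in `[0,1]`
and integer multiples of `ε`. -/
def ValidStart (Mk : Market B S) (ε : ℝ) (st : MState B S) : Prop :=
  ValidState Mk st ∧ (∀ p ∈ Mk.E, st.PB p.1 ≤ st.PS p.2) ∧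
  (∀ b, 0 ≤ st.PB b) ∧ (∀ s, st.PS s ≤ 1) ∧
  (∀ b, MulEps ε (st.PB b)) ∧ (∀ s, MulEps ε (st.PS s))

/-- Reachability by a sequence of legal moves. -/
def Reachable (Mk : Market B S) (ε : ℝ) : MState B S → MState B S → Prop :=
  Relation.ReflTransGen (Step Mk ε)

/-- The potential `Φ_P = Σ_S P(S) + Σ_B (1 − P(B))`. -/
def Phi (st : MState B S) : ℝ := ∑ s : S, st.PS s + ∑ b : B, (1 - st.PB b)

/-- A no-change buyer move: an unmatched buyer overbids and steals a matched seller
while leaving the potential `Φ_P` unchanged. -/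
def NoChangeBuyerMove (Mk : Market B S) (ε : ℝ) (st st' : MState B S) : Prop :=
  Step Mk ε st st' ∧ Phi st' = Phi st ∧
  ∃ (b : B) (s : S), ¬ BMatched st b ∧ SMatched st s ∧ (b, s) ∈ st'.M

section Aux

lemma mulEps_le {ε x y : ℝ} (hε : 0 < ε) (hx : MulEps ε x) (hy : MulEps ε y)
    (h : x < y + ε) : x ≤ y := by
  obtain ⟨k, rfl⟩ := hx
  obtain ⟨j, rfl⟩ := hy
  have h1 : (k : ℝ) * ε < (j + 1) * ε := by linarith
  have h2 : (k : ℝ) < j + 1 := lt_of_mul_lt_mul_right h1 hε.le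
  have h3 : k < j + 1 := by exact_mod_cast h2
  have h4 : k ≤ j := by omega
  have h5 : (k : ℝ) ≤ j := by exact_mod_cast h4
  nlinarith

lemma sum_update_univ {B : Type*} [Fintype B] [DecidableEq B] (g : B → ℝ) (b : B) (v : ℝ) :
    ∑ x : B, Function.update g b v x = ∑ x : B, g x + (v - g b) := by
  rw [Finset.sum_update_of_mem (Finset.mem_univ b),
    Finset.sum_eq_sum_sdiff_singleton_add (Finset.mem_univ b) g]
  ring

lemma sum_one_sub_update {B : Type*} [Fintype B] [DecidableEq B] (g : B → ℝ) (b : B) (v : ℝ) :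
    ∑ x : B, (1 - Function.update g b v x) = ∑ x : B, (1 - g x) - (v - g b) := by
  rw [Finset.sum_sub_distrib, Finset.sum_sub_distrib, sum_update_univ]
  ring

/-- The invariant preserved along the mechanism on a complete graph. -/
structure InvS (Mk : Market B S) (ε : ℝ) (st : MState B S) : Prop where
  pairEq : ∀ p ∈ st.M, st.PB p.1 = st.PS p.2
  unmBid : ∀ b, ¬ BMatched st b → ∀ s, st.PB b ≤ st.PS s
  mulB : ∀ b, MulEps ε (st.PB b)
  mulS : ∀ s, MulEps ε (st.PS s)

lemma Phi_matchPair (st : MState B S) (b : B) (s : S) (v : ℝ) :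
    Phi (matchPair st b s v) = Phi st + (st.PB b - st.PS s) := by
  unfold Phi matchPair
  simp only
  rw [sum_update_univ st.PS s v, sum_one_sub_update st.PB b v]
  ring

lemma initial_inv (Mk : Market B S) (hE : Mk.E = Finset.univ) {ε : ℝ} {st₀ : MState B S}
    (h₀ : ValidStart Mk ε st₀) : InvS Mk ε st₀ := by
  obtain ⟨⟨hmat, _, _, hpl⟩, hbs, _, _, hmb, hms⟩ := h₀
  refine ⟨?_, ?_, hmb, hms⟩
  · intro p hp
    exact le_antisymm (hbs p (by rw [hE]; exact Finset.mem_univ p)) (hpl p hp)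
  · intro b _ s
    exact hbs (b, s) (by rw [hE]; exact Finset.mem_univ _)

lemma step_inv (Mk : Market B S) (hE : Mk.E = Finset.univ) {ε : ℝ} (hε : 0 < ε)
    {st st' : MState B S} (hinv : InvS Mk ε st) (hstep : Step Mk ε st st') :
    InvS Mk ε st' := by
  classical
  cases hstep with
  | buyBid b b' hb hlt hval hmul hincr hnoint =>
    refine ⟨?_, ?_, ?_, hinv.mulS⟩
    · intro p hp
      have hpb : p.1 ≠ b := by
        intro h
        exact hb ⟨p.2, by rw [← h]; simpa using hp⟩
      show Function.update st.PB b b' p.1 = st.PS p.2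
      rw [Function.update_of_ne hpb]
      exact hinv.pairEq p hp
    · intro b'' hbm s''
      have hbm' : ¬ BMatched st b'' := hbm
      show Function.update st.PB b b' b'' ≤ st.PS s''
      rcases eq_or_ne b'' b with rfl | hne
      · rw [Function.update_self]
        have hni := hnoint s''
        unfold SellerInterested at hni
        push_neg at hni
        have hni' := hni (by rw [hE]; exact Finset.mem_univ _)
        by_cases hsm : SMatched st s''
        · have := hni'.2 hsm
          exact mulEps_le hε hmul (hinv.mulS s'') (by linarith)
        · have := hni'.1 hsm
          linarith
      · rw [Function.update_of_ne hne]
        exact hinv.unmBid b'' hbm' s''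
    · intro b''
      rcases eq_or_ne b'' b with rfl | hne
      · show MulEps ε (Function.update st.PB b'' b' b'')
        rw [Function.update_self]; exact hmul
      · show MulEps ε (Function.update st.PB b b' b'')
        rw [Function.update_of_ne hne]; exact hinv.mulB b''
  | buyMatch b b' s hb h1 h2 hmul hincr hint hprio =>
    have hPSsb' : st.PS s ≤ b' := by
      rcases hint.2 with ⟨_, h⟩ | ⟨_, h⟩ <;> linarith
    refine ⟨?_, ?_, ?_, ?_⟩
    · intro p hp
      simp only [matchPair, Finset.mem_insert, Finset.mem_filter] at hp
      rcases hp with rfl | ⟨hpM, hp1, hp2⟩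
      · show Function.update st.PB b b' b = Function.update st.PS s b' s
        rw [Function.update_self, Function.update_self]
      · show Function.update st.PB b b' p.1 = Function.update st.PS s b' p.2
        rw [Function.update_of_ne hp1, Function.update_of_ne hp2]
        exact hinv.pairEq p hpM
    · intro b'' hbm s''
      have hbb : b'' ≠ b := by
        rintro rfl
        exact hbm ⟨s, by simp [matchPair]⟩
      show Function.update st.PB b b' b'' ≤ Function.update st.PS s b' s''
      rw [Function.update_of_ne hbb]
      by_cases hb2 : BMatched st b''
      · obtain ⟨s₁, hs₁⟩ := hb2
        have hs₁s : s₁ = s := by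
          by_contra hne
          exact hbm ⟨s₁, by simp [matchPair, Finset.mem_insert, Finset.mem_filter, hs₁, hbb, hne]⟩
        subst hs₁s
        have hpb : st.PB b'' = st.PS s₁ := hinv.pairEq (b'', s₁) hs₁
        have hsm : SMatched st s₁ := ⟨b'', hs₁⟩
        have hup : st.PS s₁ + ε ≤ b' := by
          rcases hint.2 with ⟨h, _⟩ | ⟨_, h⟩
          · exact absurd hsm h
          · exact h
        rcases eq_or_ne s'' s₁ with rfl | hss
        · rw [Function.update_self]; linarith
        · rw [Function.update_of_ne hss]
          have h2' : b' ≤ st.PS s'' + ε := hincr.1 s'' (by rw [hE]; exact Finset.mem_univ _)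
          linarith
      · have hle := hinv.unmBid b'' hb2
        rcases eq_or_ne s'' s with rfl | hss
        · rw [Function.update_self]
          exact le_trans (hle s'') hPSsb'
        · rw [Function.update_of_ne hss]
          exact hle s''
    · intro b''
      rcases eq_or_ne b'' b with rfl | hne
      · show MulEps ε (Function.update st.PB b'' b' b'')
        rw [Function.update_self]; exact hmul
      · show MulEps ε (Function.update st.PB b b' b'')
        rw [Function.update_of_ne hne]; exact hinv.mulB b''
    · intro s''
      rcases eq_or_ne s'' s with rfl | hne
      · show MulEps ε (Function.update st.PS s'' b' s'')
        rw [Function.update_self]; exact hmul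
      · show MulEps ε (Function.update st.PS s b' s'')
        rw [Function.update_of_ne hne]; exact hinv.mulS s''
  | sellOffer s s' hs hlt hval hmul hincr hnoint =>
    refine ⟨?_, ?_, hinv.mulB, ?_⟩
    · intro p hp
      have hps : p.2 ≠ s := by
        intro h
        exact hs ⟨p.1, by rw [← h]; simpa using hp⟩
      show st.PB p.1 = Function.update st.PS s s' p.2
      rw [Function.update_of_ne hps]
      exact hinv.pairEq p hp
    · intro b'' hbm s''
      have hbm' : ¬ BMatched st b'' := hbm
      show st.PB b'' ≤ Function.update st.PS s s' s''
      rcases eq_or_ne s'' s with rfl | hne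
      · rw [Function.update_self]
        exact hincr.2 b'' (by rw [hE]; exact Finset.mem_univ _) hbm'
      · rw [Function.update_of_ne hne]
        exact hinv.unmBid b'' hbm' s''
    · intro s''
      rcases eq_or_ne s'' s with rfl | hne
      · show MulEps ε (Function.update st.PS s'' s' s'')
        rw [Function.update_self]; exact hmul
      · show MulEps ε (Function.update st.PS s s' s'')
        rw [Function.update_of_ne hne]; exact hinv.mulS s''
  | sellMatch s s' b hs h1 h2 hmul hincr hint hprio =>
    refine ⟨?_, ?_, ?_, ?_⟩
    · intro p hp
      simp only [matchPair, Finset.mem_insert, Finset.mem_filter] at hp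
      rcases hp with rfl | ⟨hpM, hp1, hp2⟩
      · show Function.update st.PB b s' b = Function.update st.PS s s' s
        rw [Function.update_self, Function.update_self]
      · show Function.update st.PB b s' p.1 = Function.update st.PS s s' p.2
        rw [Function.update_of_ne hp1, Function.update_of_ne hp2]
        exact hinv.pairEq p hpM
    · intro b'' hbm s''
      have hbb : b'' ≠ b := by
        rintro rfl
        exact hbm ⟨s, by simp [matchPair]⟩
      have hb2 : ¬ BMatched st b'' := by
        rintro ⟨s₁, hs₁⟩
        rcases eq_or_ne s₁ s with rfl | hne
        · exact hs ⟨b'', hs₁⟩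
        · exact hbm ⟨s₁, by simp [matchPair, Finset.mem_insert, Finset.mem_filter, hs₁, hbb, hne]⟩
      have hle := hinv.unmBid b'' hb2
      show Function.update st.PB b s' b'' ≤ Function.update st.PS s s' s''
      rw [Function.update_of_ne hbb]
      rcases eq_or_ne s'' s with rfl | hss
      · rw [Function.update_self]
        exact hincr.2 b'' (by rw [hE]; exact Finset.mem_univ _) hb2
      · rw [Function.update_of_ne hss]
        exact hle s''
    · intro b''
      rcases eq_or_ne b'' b with rfl | hne
      · show MulEps ε (Function.update st.PB b'' s' b'')
        rw [Function.update_self]; exact hmul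
      · show MulEps ε (Function.update st.PB b s' b'')
        rw [Function.update_of_ne hne]; exact hinv.mulB b''
    · intro s''
      rcases eq_or_ne s'' s with rfl | hne
      · show MulEps ε (Function.update st.PS s'' s' s'')
        rw [Function.update_self]; exact hmul
      · show MulEps ε (Function.update st.PS s s' s'')
        rw [Function.update_of_ne hne]; exact hinv.mulS s''

lemma anatomy (Mk : Market B S) (hE : Mk.E = Finset.univ) {ε : ℝ} (hε : 0 < ε)
    {st st' : MState B S} (hinv : InvS Mk ε st) (hmv : NoChangeBuyerMove Mk ε st st') :
    ∃ x : S, SMatched st x ∧ (∃ b, ¬ BMatched st b ∧ st.PB b = st.PS x) ∧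
      (∀ s', st.PS x ≤ st.PS s') ∧
      st'.PS = Function.update st.PS x (st.PS x + ε) ∧
      (∀ y, SMatched st' y ↔ SMatched st y) ∧
      (∀ b, ¬ BMatched st' b → st'.PB b ≤ st.PS x) := by
  classical
  obtain ⟨hstep, hphi, b₀, s₀, hb₀, hs₀, hmem⟩ := hmv
  cases hstep with
  | buyBid b b' hb hlt hval hmul hincr hnoint =>
    exfalso
    have hcomp : Phi (⟨Function.update st.PB b b', st.PS, st.M⟩ : MState B S)
        = Phi st - (b' - st.PB b) := by
      unfold Phi
      simp only
      rw [sum_one_sub_update st.PB b b']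
      ring
    rw [hcomp] at hphi
    have : b' = st.PB b := by linarith
    linarith
  | buyMatch b b' s hb h1 h2 hmul hincr hint hprio =>
    have hmemM : (b₀, s₀) ∈ (matchPair st b s b').M := hmem
    simp only [matchPair, Finset.mem_insert, Finset.mem_filter, Prod.mk.injEq] at hmemM
    rcases hmemM with ⟨rfl, rfl⟩ | ⟨hM, _, _⟩
    · -- b₀ = b, s₀ = s
      have heq : st.PB b₀ = st.PS s₀ := by
        rw [Phi_matchPair] at hphi
        linarith
      have hup : st.PS s₀ + ε ≤ b' := by
        rcases hint.2 with ⟨h, _⟩ | ⟨_, h⟩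
        · exact absurd hs₀ h
        · exact h
      have hlow : b' ≤ st.PS s₀ + ε := hincr.1 s₀ (by rw [hE]; exact Finset.mem_univ _)
      have hb' : b' = st.PS s₀ + ε := le_antisymm hlow hup
      refine ⟨s₀, hs₀, ⟨b₀, hb₀, heq⟩, ?_, ?_, ?_, ?_⟩
      · intro s'
        rw [← heq]
        exact hinv.unmBid b₀ hb₀ s'
      · show Function.update st.PS s₀ b' = Function.update st.PS s₀ (st.PS s₀ + ε)
        rw [hb']
      · intro y
        constructor
        · rintro ⟨b₂, hm2⟩
          simp only [matchPair, Finset.mem_insert, Finset.mem_filter, Prod.mk.injEq] at hm2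
          rcases hm2 with ⟨rfl, rfl⟩ | ⟨hM2, _, _⟩
          · exact hs₀
          · exact ⟨b₂, hM2⟩
        · rintro ⟨b₂, hm2⟩
          rcases eq_or_ne y s₀ with rfl | hys
          · exact ⟨b₀, by simp [matchPair]⟩
          · have hb₂b : b₂ ≠ b₀ := by
              rintro rfl
              exact hb₀ ⟨y, hm2⟩
            exact ⟨b₂, by simp [matchPair, Finset.mem_insert, Finset.mem_filter, hm2, hb₂b, hys]⟩
      · intro b₂ hbm
        have hbb : b₂ ≠ b₀ := by
          rintro rfl
          exact hbm ⟨s₀, by simp [matchPair]⟩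
        show Function.update st.PB b₀ b' b₂ ≤ st.PS s₀
        rw [Function.update_of_ne hbb]
        by_cases hm2 : BMatched st b₂
        · obtain ⟨s₁, hs₁⟩ := hm2
          have : s₁ = s₀ := by
            by_contra hne
            exact hbm ⟨s₁, by simp [matchPair, Finset.mem_insert, Finset.mem_filter, hs₁, hbb, hne]⟩
          subst this
          exact le_of_eq (hinv.pairEq (b₂, s₁) hs₁)
        · exact hinv.unmBid b₂ hm2 s₀
    · exact absurd ⟨s₀, hM⟩ hb₀
  | sellOffer s s' hs hlt hval hmul hincr hnoint =>
    exfalso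
    have hcomp : Phi (⟨st.PB, Function.update st.PS s s', st.M⟩ : MState B S)
        = Phi st + (s' - st.PS s) := by
      unfold Phi
      simp only
      rw [sum_update_univ st.PS s s']
      ring
    rw [hcomp] at hphi
    have : s' = st.PS s := by linarith
    linarith
  | sellMatch s s' b hs h1 h2 hmul hincr hint hprio =>
    exfalso
    have hmemM : (b₀, s₀) ∈ (matchPair st b s s').M := hmem
    simp only [matchPair, Finset.mem_insert, Finset.mem_filter, Prod.mk.injEq] at hmemM
    rcases hmemM with ⟨rfl, rfl⟩ | ⟨hM, _, _⟩
    · exact hs hs₀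
    · exact hb₀ ⟨s₀, hM⟩

end Aux

/-- in the complete-graph DOA mechanism, any sequence of consecutive
no-change buyer moves has length at most `γ`, the current number of matched pairs. -/
theorem no_change_buyer_moves_bounded
    (Mk : Market B S) (hE : Mk.E = Finset.univ) (ε : ℝ) (hε : 0 < ε)
    (st₀ : MState B S) (h₀ : ValidStart Mk ε st₀)
    (f : ℕ → MState B S) (hreach : Reachable Mk ε st₀ (f 0)) (L : ℕ)
    (hsteps : ∀ t < L, NoChangeBuyerMove Mk ε (f t) (f (t + 1))) :
    L ≤ (f 0).M.card := by
  classical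
  rcases Nat.eq_zero_or_pos L with rfl | hL
  · exact Nat.zero_le _
  -- the invariant holds at f 0
  have hinv0 : InvS Mk ε (f 0) := by
    have hgen : ∀ st', Reachable Mk ε st₀ st' → InvS Mk ε st' := by
      intro st' h
      induction h with
      | refl => exact initial_inv Mk hE h₀
      | tail _ hstep ih => exact step_inv Mk hE hε ih hstep
    exact hgen _ hreach
  -- the invariant holds at all f t for t < L
  have hinvt : ∀ t, t < L → InvS Mk ε (f t) := by
    intro t
    induction t with
    | zero => exact fun _ => hinv0
    | succ n ih =>
      intro h
      exact step_inv Mk hE hε (ih (by omega)) (hsteps n (by omega)).1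
  have key : ∀ t, t < L → ∃ x : S, SMatched (f t) x ∧
      (∃ b, ¬ BMatched (f t) b ∧ (f t).PB b = (f t).PS x) ∧
      (∀ s', (f t).PS x ≤ (f t).PS s') ∧
      (f (t + 1)).PS = Function.update (f t).PS x ((f t).PS x + ε) ∧
      (∀ y, SMatched (f (t + 1)) y ↔ SMatched (f t) y) ∧
      (∀ b, ¬ BMatched (f (t + 1)) b → (f (t + 1)).PB b ≤ (f t).PS x) :=
    fun t ht => anatomy Mk hE hε (hinvt t ht) (hsteps t ht)
  have hS : Nonempty S := ⟨(key 0 hL).choose⟩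
  have key' : ∀ t, ∃ x : S, t < L → (SMatched (f t) x ∧
      (∃ b, ¬ BMatched (f t) b ∧ (f t).PB b = (f t).PS x) ∧
      (∀ s', (f t).PS x ≤ (f t).PS s') ∧
      (f (t + 1)).PS = Function.update (f t).PS x ((f t).PS x + ε) ∧
      (∀ y, SMatched (f (t + 1)) y ↔ SMatched (f t) y) ∧
      (∀ b, ¬ BMatched (f (t + 1)) b → (f (t + 1)).PB b ≤ (f t).PS x)) := by
    intro t
    by_cases ht : t < L
    · obtain ⟨x, hx⟩ := key t ht
      exact ⟨x, fun _ => hx⟩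
    · exact ⟨hS.some, fun h => absurd h ht⟩
  choose g hg using key'
  -- single step monotonicity of offers
  have hmono1 : ∀ t, t < L → ∀ x, (f t).PS x ≤ (f (t + 1)).PS x := by
    intro t ht x
    rw [(hg t ht).2.2.2.1]
    rcases eq_or_ne x (g t) with rfl | hx
    · rw [Function.update_self]; linarith
    · rw [Function.update_of_ne hx]
  -- general monotonicity
  have hmono : ∀ t t', t ≤ t' → t' < L → ∀ x, (f t).PS x ≤ (f t').PS x := by
    intro t t' h
    induction t', h using Nat.le_induction with
    | base => exact fun _ x => le_refl _
    | succ n hn ih =>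
      intro h' x
      exact le_trans (ih (by omega) x) (hmono1 n (by omega) x)
  -- the minimum offer is constant along the sequence
  have hmconst : ∀ t, t < L → (f t).PS (g t) = (f 0).PS (g 0) := by
    intro t
    induction t with
    | zero => exact fun _ => rfl
    | succ n ih =>
      intro h
      have hn : n < L := by omega
      have ihn := ih hn
      obtain ⟨hsm, ⟨b, hbu, hbe⟩, hmin, hps, hsmiff, hub⟩ := hg (n + 1) h
      obtain ⟨hsm', _, hmin', hps', hsmiff', hub'⟩ := hg n hn
      have hle : (f (n + 1)).PS (g (n + 1)) ≤ (f n).PS (g n) := by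
        rw [← hbe]; exact hub' b hbu
      have hge : (f n).PS (g n) ≤ (f (n + 1)).PS (g (n + 1)) :=
        le_trans (hmin' (g (n + 1))) (hmono1 n hn (g (n + 1)))
      linarith
  -- sellers chosen at different times are different
  have hginj : ∀ t, t < L → ∀ t', t' < L → t < t' → g t ≠ g t' := by
    intro t ht t' ht' hlt heq
    have h1 : (f (t + 1)).PS (g t) = (f t).PS (g t) + ε := by
      rw [(hg t ht).2.2.2.1, Function.update_self]
    have h2 : (f (t + 1)).PS (g t) ≤ (f t').PS (g t) := hmono (t + 1) t' hlt ht' _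
    have h3 : (f t').PS (g t) = (f t).PS (g t) := by
      conv_lhs => rw [heq]
      rw [hmconst t' ht', hmconst t ht]
    linarith
  -- matched sellers are matched at time 0
  have hmatch : ∀ t, t < L → ∀ x, SMatched (f t) x → SMatched (f 0) x := by
    intro t
    induction t with
    | zero => exact fun _ x h => h
    | succ n ih =>
      intro h x hx
      have hn : n < L := by omega
      exact ih hn x (((hg n hn).2.2.2.2.1 x).1 hx)
  -- conclude with a cardinality argument
  have hsub : ∀ t ∈ Finset.range L, g t ∈ (f 0).M.image Prod.snd := by
    intro t ht
    rw [Finset.mem_range] at ht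
    obtain ⟨b₂, hb₂⟩ := hmatch t ht (g t) (hg t ht).1
    exact Finset.mem_image.2 ⟨(b₂, g t), hb₂, rfl⟩
  have hinj : Set.InjOn g (Finset.range L) := by
    intro a ha b hb hab
    simp only [Finset.coe_range, Set.mem_Iio] at ha hb
    by_contra hne
    rcases Nat.lt_or_ge a b with h | h
    · exact absurd hab (hginj a ha b hb h)
    · have h' : b < a := by omega
      exact absurd hab.symm (hginj b hb a ha h')
  calc L = (Finset.range L).card := (Finset.card_range L).symm
    _ ≤ ((f 0).M.image Prod.snd).card := Finset.card_le_card_of_injOn g hsub hinj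
    _ ≤ (f 0).M.card := Finset.card_image_le
end

section
/- For any ε > 0 and any well-behaved ε-stable state (P, Π) of a market with n agents, there exists a sequence of at most n legal moves of the double-oral-auction mechanism, starting from the zero-information state, that reaches (P, Π). -/
open Finset

variable {B S : Type*} [Fintype B] [Fintype S]

variable [DecidableEq B] [DecidableEq S]

/-- The zero-information state: every buyer bids 0, every seller offers 1, no matches. -/
def zeroInfoState (B S : Type*) : MState B S := ⟨fun _ => 0, fun _ => 1, ∅⟩

/-- A well-behaved ε-stable state: on every edge with both endpoints unmatched the bid is
strictly below the offer, and on every edge with at least one unmatched endpoint the bid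
is at most the offer. -/
def WellBehaved (Mk : Market B S) (st : MState B S) : Prop :=
  (∀ p ∈ Mk.E, ¬ BMatched st p.1 → ¬ SMatched st p.2 → st.PB p.1 < st.PS p.2) ∧
  (∀ p ∈ Mk.E, (¬ BMatched st p.1 ∨ ¬ SMatched st p.2) → st.PB p.1 ≤ st.PS p.2)

section AuxDOA

/-- Reaching in exactly `k` steps, phrased with an explicit sequence. -/
def ReachN (Mk : Market B S) (ε : ℝ) (k : ℕ) (s t : MState B S) : Prop :=
  ∃ f : ℕ → MState B S, f 0 = s ∧ f k = t ∧ ∀ i < k, Step Mk ε (f i) (f (i + 1))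

lemma reachN_zero (Mk : Market B S) (ε : ℝ) (s : MState B S) : ReachN Mk ε 0 s s :=
  ⟨fun _ => s, rfl, rfl, fun i hi => absurd hi (Nat.not_lt_zero i)⟩

lemma reachN_cons {Mk : Market B S} {ε : ℝ} {k : ℕ} {s t u : MState B S}
    (h : Step Mk ε s t) (h2 : ReachN Mk ε k t u) : ReachN Mk ε (k + 1) s u := by
  obtain ⟨f, hf0, hfk, hstep⟩ := h2
  refine ⟨fun i => if i = 0 then s else f (i - 1), rfl, by simp [hfk], ?_⟩
  intro i hi
  match i with
  | 0 => simpa [hf0] using h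
  | (j+1) => simpa using hstep j (by omega)

/-- Reaching in at most `K` steps. -/
def ReachLe (Mk : Market B S) (ε : ℝ) (K : ℕ) (s t : MState B S) : Prop :=
  ∃ k ≤ K, ReachN Mk ε k s t

lemma reachLe_refl (Mk : Market B S) (ε : ℝ) (K : ℕ) (s : MState B S) :
    ReachLe Mk ε K s s := ⟨0, Nat.zero_le K, reachN_zero Mk ε s⟩

lemma reachLe_cons {Mk : Market B S} {ε : ℝ} {K : ℕ} {s t u : MState B S}
    (h : Step Mk ε s t) (h2 : ReachLe Mk ε K t u) : ReachLe Mk ε (K + 1) s u := by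
  obtain ⟨k, hk, hr⟩ := h2
  exact ⟨k + 1, by omega, reachN_cons h hr⟩

lemma reachLe_mono {Mk : Market B S} {ε : ℝ} {K K' : ℕ} {s t : MState B S}
    (h : ReachLe Mk ε K s t) (hK : K ≤ K') : ReachLe Mk ε K' s t := by
  obtain ⟨k, hk, hr⟩ := h
  exact ⟨k, le_trans hk hK, hr⟩

lemma mstate_ext {a b : MState B S} (h1 : a.PB = b.PB) (h2 : a.PS = b.PS)
    (h3 : a.M = b.M) : a = b := by
  cases a; cases b; simp_all

open Classical in
/-- The intermediate state of the constructed run: pairs in `Rp`, buyers in `Ub`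
and sellers in `Us` are still unprocessed (at their zero-information prices),
everything else already carries its final price. -/
noncomputable def midState (st : MState B S) (Rp : Finset (B × S)) (Ub : Finset B)
    (Us : Finset S) : MState B S where
  PB b := if (∃ s, (b, s) ∈ Rp) ∨ b ∈ Ub then 0 else st.PB b
  PS s := if (∃ b, (b, s) ∈ Rp) ∨ s ∈ Us then 1 else st.PS s
  M := st.M \ Rp

open Classical in
lemma midState_PB (st : MState B S) (Rp : Finset (B × S)) (Ub : Finset B)
    (Us : Finset S) (b : B) :
    (midState st Rp Ub Us).PB b
      = if (∃ s, (b, s) ∈ Rp) ∨ b ∈ Ub then 0 else st.PB b := rfl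

open Classical in
lemma midState_PS (st : MState B S) (Rp : Finset (B × S)) (Ub : Finset B)
    (Us : Finset S) (s : S) :
    (midState st Rp Ub Us).PS s
      = if (∃ b, (b, s) ∈ Rp) ∨ s ∈ Us then 1 else st.PS s := rfl

lemma midState_M (st : MState B S) (Rp : Finset (B × S)) (Ub : Finset B)
    (Us : Finset S) : (midState st Rp Ub Us).M = st.M \ Rp := rfl

end AuxDOA
set_option linter.unusedSectionVars false

set_option maxHeartbeats 1000000 in
lemma midReach (Mk : Market B S) (ε : ℝ) (hε : 0 < ε)
    (st : MState B S) (hvalid : ValidState Mk st)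
    (hstable : IsEpsStable Mk ε st) (hwb : WellBehaved Mk st)
    (hmulB : ∀ b, MulEps ε (st.PB b)) (hmulS : ∀ s, MulEps ε (st.PS s)) :
    ∀ (n : ℕ) (Rp : Finset (B × S)) (Ub : Finset B) (Us : Finset S),
      2 * Rp.card + Ub.card + Us.card ≤ n →
      Rp ⊆ st.M →
      (∀ q ∈ st.M, q ∉ Rp → ∀ q' ∈ Rp, st.PB q'.1 ≤ st.PB q.1) →
      (∀ b ∈ Ub, ¬ BMatched st b) →
      (∀ s ∈ Us, ¬ SMatched st s) →
      (Rp.Nonempty → ∀ b, ¬ BMatched st b → b ∈ Ub) →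
      (Rp.Nonempty ∨ Ub.Nonempty → ∀ s, ¬ SMatched st s → s ∈ Us) →
      ReachLe Mk ε (2 * Rp.card + Ub.card + Us.card) (midState st Rp Ub Us) st := by
  obtain ⟨⟨hME, hinjB, hinjS⟩, hPBle, hPSge, hpair⟩ := hvalid
  obtain ⟨heps, hUBv, hUSv, heq⟩ := hstable
  obtain ⟨hwb1, hwb2⟩ := hwb
  intro n
  induction n with
  | zero =>
    intro Rp Ub Us hn h1 h2 h3 h4 h5 h6
    have hRp : Rp = ∅ := Finset.card_eq_zero.mp (by omega)
    have hUb : Ub = ∅ := Finset.card_eq_zero.mp (by omega)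
    have hUs : Us = ∅ := Finset.card_eq_zero.mp (by omega)
    subst hRp; subst hUb; subst hUs
    have hmid : midState st ∅ ∅ (∅ : Finset S) = st := by
      refine mstate_ext ?_ ?_ ?_
      · funext b; rw [midState_PB, if_neg (by simp)]
      · funext s; rw [midState_PS, if_neg (by simp)]
      · rw [midState_M, Finset.sdiff_empty]
    rw [hmid]
    exact reachLe_refl Mk ε _ st
  | succ n ih =>
    intro Rp Ub Us hn h1 h2 h3 h4 h5 h6
    rcases Rp.eq_empty_or_nonempty with hRpe | hRp
    · -- no pairs left
      subst hRpe
      rcases Ub.eq_empty_or_nonempty with hUbe | hUb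
      · -- no buyers left
        subst hUbe
        rcases Us.eq_empty_or_nonempty with hUse | hUs
        · -- all done
          subst hUse
          have hmid : midState st ∅ ∅ (∅ : Finset S) = st := by
            refine mstate_ext ?_ ?_ ?_
            · funext b; rw [midState_PB, if_neg (by simp)]
            · funext s; rw [midState_PS, if_neg (by simp)]
            · rw [midState_M, Finset.sdiff_empty]
          rw [hmid]
          exact reachLe_refl Mk ε _ st
        · -- seller phase
          obtain ⟨s, hsUs⟩ := hUs
          have hsun : ¬ SMatched st s := h4 s hsUs
          have hsval : st.PS s = Mk.valS s := hUSv s hsun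
          set ms := midState st ∅ ∅ Us with hmsdef
          have hmsM : ms.M = st.M := by rw [hmsdef, midState_M, Finset.sdiff_empty]
          have hmsPB : ∀ b', ms.PB b' = st.PB b' := by
            intro b'; rw [hmsdef, midState_PB, if_neg (by simp)]
          have hsPS1 : ms.PS s = 1 := by
            rw [hmsdef, midState_PS, if_pos (Or.inr hsUs)]
          have hce := Finset.card_erase_of_mem hsUs
          have hcp : 0 < Us.card := Finset.card_pos.mpr ⟨s, hsUs⟩
          have hrec := ih ∅ ∅ (Us.erase s) (by omega) h1 h2 h3
            (fun s' hs' => h4 s' (Finset.mem_of_mem_erase hs'))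
            (fun h => absurd h Finset.not_nonempty_empty)
            (fun h => by rcases h with h | h <;> exact absurd h Finset.not_nonempty_empty)
          by_cases hs1 : st.PS s = 1
          · -- no move needed
            have hmid : midState st ∅ ∅ (Us.erase s) = ms := by
              refine mstate_ext ?_ ?_ ?_
              · rfl
              · funext s'
                rw [hmsdef, midState_PS, midState_PS]
                by_cases hss : s' = s
                · subst hss
                  rw [if_neg (by simp), if_pos (Or.inr hsUs), hs1]
                · have hiff : s' ∈ Us.erase s ↔ s' ∈ Us := by
                    simp [Finset.mem_erase, hss]
                  simp only [hiff]
              · rfl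
            rw [hmid] at hrec
            exact reachLe_mono hrec (by omega)
          · have hslt : st.PS s < 1 :=
              lt_of_le_of_ne (hsval ▸ Mk.valS_le_one s) hs1
            have hstep : Step Mk ε ms ⟨ms.PB, Function.update ms.PS s (st.PS s), ms.M⟩ := by
              refine Step.sellOffer ms s (st.PS s) ?_ ?_ (hPSge s) (hmulS s) ?_ ?_
              · rintro ⟨b', hb'⟩; rw [hmsM] at hb'; exact hsun ⟨b', hb'⟩
              · rw [hsPS1]; exact hslt
              · constructor
                · intro b' he
                  rw [hmsPB]
                  by_cases hbm : BMatched st b'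
                  · have h' : st.PB b' ≤ st.PS s := hwb2 (b', s) he (Or.inr hsun)
                    linarith
                  · have h' : st.PB b' < st.PS s := hwb1 (b', s) he hbm hsun
                    linarith
                · intro b' he hnm
                  rw [hmsPB]
                  have hbm : ¬ BMatched st b' := by
                    rintro ⟨s', hs'⟩; rw [← hmsM] at hs'; exact hnm ⟨s', hs'⟩
                  exact le_of_lt (hwb1 (b', s) he hbm hsun)
              · rintro b' ⟨he, hcase⟩
                rcases hcase with ⟨hnm, hle⟩ | ⟨hm, hle⟩
                · have hbm : ¬ BMatched st b' := by
                    rintro ⟨s', hs'⟩; rw [← hmsM] at hs'; exact hnm ⟨s', hs'⟩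
                  have h' : st.PB b' < st.PS s := hwb1 (b', s) he hbm hsun
                  rw [hmsPB] at hle; linarith
                · have hbm : BMatched st b' := by
                    obtain ⟨s', hs'⟩ := hm; rw [hmsM] at hs'; exact ⟨s', hs'⟩
                  have h' : st.PB b' ≤ st.PS s := hwb2 (b', s) he (Or.inr hsun)
                  rw [hmsPB] at hle; linarith
            have hnexteq : (⟨ms.PB, Function.update ms.PS s (st.PS s), ms.M⟩ : MState B S)
                = midState st ∅ ∅ (Us.erase s) := by
              refine mstate_ext ?_ ?_ ?_
              · rfl
              · funext s'
                show Function.update ms.PS s (st.PS s) s' = _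
                by_cases hss : s' = s
                · subst hss
                  rw [Function.update_self, midState_PS, if_neg (by simp)]
                · rw [Function.update_of_ne hss, hmsdef, midState_PS, midState_PS]
                  have hiff : s' ∈ Us.erase s ↔ s' ∈ Us := by
                    simp [Finset.mem_erase, hss]
                  simp only [hiff]
              · rw [hmsM, midState_M, Finset.sdiff_empty]
            rw [← hnexteq] at hrec
            exact reachLe_mono (reachLe_cons hstep hrec) (by omega)
      · -- buyer phase
        obtain ⟨b, hbUb⟩ := hUb
        have hUsfull := h6 (Or.inr ⟨b, hbUb⟩)
        have hbun : ¬ BMatched st b := h3 b hbUb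
        have hbval : st.PB b = Mk.valB b := hUBv b hbun
        set ms := midState st ∅ Ub Us with hmsdef
        have hmsM : ms.M = st.M := by rw [hmsdef, midState_M, Finset.sdiff_empty]
        have hbPB : ms.PB b = 0 := by rw [hmsdef, midState_PB, if_pos (Or.inr hbUb)]
        have sellerCases : ∀ s', (¬ SMatched st s' ∧ ms.PS s' = 1) ∨
            (SMatched st s' ∧ ms.PS s' = st.PS s') := by
          intro s'
          by_cases hm : SMatched st s'
          · right
            refine ⟨hm, ?_⟩
            rw [hmsdef, midState_PS, if_neg ?_]
            rintro (⟨b2, hb2⟩ | hUs')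
            · exact absurd hb2 (Finset.notMem_empty _)
            · exact h4 s' hUs' hm
          · left
            exact ⟨hm, by rw [hmsdef, midState_PS, if_pos (Or.inr (hUsfull s' hm))]⟩
        have hce := Finset.card_erase_of_mem hbUb
        have hcp : 0 < Ub.card := Finset.card_pos.mpr ⟨b, hbUb⟩
        have hrec := ih ∅ (Ub.erase b) Us (by omega) h1 h2
          (fun b' hb' => h3 b' (Finset.mem_of_mem_erase hb')) h4
          (fun h => absurd h Finset.not_nonempty_empty)
          (fun _ => hUsfull)
        by_cases hb0 : st.PB b = 0
        · -- no move needed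
          have hmid : midState st ∅ (Ub.erase b) Us = ms := by
            refine mstate_ext ?_ ?_ ?_
            · funext b'
              rw [hmsdef, midState_PB, midState_PB]
              by_cases hbb : b' = b
              · subst hbb
                rw [if_neg (by simp), if_pos (Or.inr hbUb), hb0]
              · have hiff : b' ∈ Ub.erase b ↔ b' ∈ Ub := by
                  simp [Finset.mem_erase, hbb]
                simp only [hiff]
            · rfl
            · rfl
          rw [hmid] at hrec
          exact reachLe_mono hrec (by omega)
        · have hbpos : 0 < st.PB b :=
            lt_of_le_of_ne (hbval ▸ Mk.valB_nonneg b) (Ne.symm hb0)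
          have hstep : Step Mk ε ms ⟨Function.update ms.PB b (st.PB b), ms.PS, ms.M⟩ := by
            refine Step.buyBid ms b (st.PB b) ?_ ?_ (hPBle b) (hmulB b) ?_ ?_
            · rintro ⟨s', hs'⟩; rw [hmsM] at hs'; exact hbun ⟨s', hs'⟩
            · rw [hbPB]; exact hbpos
            · constructor
              · intro s' he
                rcases sellerCases s' with ⟨hm, hv⟩ | ⟨hm, hv⟩
                · rw [hv]
                  have := Mk.valB_le_one b
                  have := hPBle b
                  linarith
                · rw [hv]
                  have h' : st.PB b ≤ st.PS s' := hwb2 (b, s') he (Or.inl hbun)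
                  linarith
              · intro s' he hnm
                rcases sellerCases s' with ⟨hm, hv⟩ | ⟨hm, hv⟩
                · rw [hv]
                  have := Mk.valB_le_one b
                  have := hPBle b
                  linarith
                · obtain ⟨b2, hb2⟩ := hm
                  exact absurd ⟨b2, by rw [← hmsM] at hb2; exact hb2⟩ hnm
            · rintro s' ⟨he, hcase⟩
              rcases sellerCases s' with ⟨hm, hv⟩ | ⟨hm, hv⟩
              · rcases hcase with ⟨_, hle⟩ | ⟨hm2, _⟩
                · rw [hv] at hle
                  have h1' : st.PB b < st.PS s' := hwb1 (b, s') he hbun hm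
                  have h2' : st.PS s' = Mk.valS s' := hUSv s' hm
                  have := Mk.valS_le_one s'
                  linarith
                · obtain ⟨b2, hb2⟩ := hm2
                  rw [hmsM] at hb2
                  exact hm ⟨b2, hb2⟩
              · rcases hcase with ⟨hnm2, _⟩ | ⟨_, hle⟩
                · obtain ⟨b2, hb2⟩ := hm
                  rw [← hmsM] at hb2
                  exact hnm2 ⟨b2, hb2⟩
                · rw [hv] at hle
                  have h' : st.PB b ≤ st.PS s' := hwb2 (b, s') he (Or.inl hbun)
                  linarith
          have hnexteq : (⟨Function.update ms.PB b (st.PB b), ms.PS, ms.M⟩ : MState B S)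
              = midState st ∅ (Ub.erase b) Us := by
            refine mstate_ext ?_ ?_ ?_
            · funext b'
              show Function.update ms.PB b (st.PB b) b' = _
              by_cases hbb : b' = b
              · subst hbb
                rw [Function.update_self, midState_PB, if_neg (by simp)]
              · rw [Function.update_of_ne hbb, hmsdef, midState_PB, midState_PB]
                have hiff : b' ∈ Ub.erase b ↔ b' ∈ Ub := by
                  simp [Finset.mem_erase, hbb]
                simp only [hiff]
            · rfl
            · rw [hmsM, midState_M, Finset.sdiff_empty]
          rw [← hnexteq] at hrec
          exact reachLe_mono (reachLe_cons hstep hrec) (by omega)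
    · -- pair phase
      obtain ⟨q, hqRp, hqmax⟩ := Rp.exists_max_image (fun q => st.PB q.1) hRp
      obtain ⟨b, s⟩ := q
      have hqM : (b, s) ∈ st.M := h1 hqRp
      have hqE : (b, s) ∈ Mk.E := hME hqM
      have hUbfull := h5 hRp
      have hUsfull := h6 (Or.inl hRp)
      have hps : st.PS s = st.PB b := (heq (b, s) hqM).symm
      have hvSp : Mk.valS s ≤ st.PB b := hps ▸ hPSge s
      have hp0 : 0 ≤ st.PB b := le_trans (Mk.valS_nonneg s) hvSp
      have hpvB : st.PB b ≤ Mk.valB b := hPBle b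
      have hp1 : st.PB b ≤ 1 := le_trans hpvB (Mk.valB_le_one b)
      set ms := midState st Rp Ub Us with hmsdef
      have hmsM : ms.M = st.M \ Rp := by rw [hmsdef, midState_M]
      have hbnm : ¬ BMatched ms b := by
        rintro ⟨s', hs'⟩
        rw [hmsM, Finset.mem_sdiff] at hs'
        have hd : (b, s') = (b, s) := hinjB _ hs'.1 _ hqM rfl
        exact hs'.2 (by rw [hd]; exact hqRp)
      have hsnm : ¬ SMatched ms s := by
        rintro ⟨b', hb'⟩
        rw [hmsM, Finset.mem_sdiff] at hb'
        have hd : (b', s) = (b, s) := hinjS _ hb'.1 _ hqM rfl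
        exact hb'.2 (by rw [hd]; exact hqRp)
      have hbPB : ms.PB b = 0 := by
        rw [hmsdef, midState_PB, if_pos (Or.inl ⟨s, hqRp⟩)]
      have hsPS : ms.PS s = 1 := by
        rw [hmsdef, midState_PS, if_pos (Or.inl ⟨b, hqRp⟩)]
      have buyerCases : ∀ b', (¬ BMatched ms b' ∧ ms.PB b' = 0) ∨
          (BMatched ms b' ∧ ms.PB b' = st.PB b') := by
        intro b'
        by_cases hm : ∃ s', (b', s') ∈ st.M \ Rp
        · right
          obtain ⟨s0, hs0⟩ := hm
          rw [Finset.mem_sdiff] at hs0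
          refine ⟨⟨s0, by rw [hmsM, Finset.mem_sdiff]; exact hs0⟩, ?_⟩
          rw [hmsdef, midState_PB, if_neg ?_]
          rintro (⟨s2, hs2⟩ | hUb')
          · have hd : (b', s2) = (b', s0) := hinjB _ (h1 hs2) _ hs0.1 rfl
            rw [hd] at hs2
            exact hs0.2 hs2
          · exact h3 b' hUb' ⟨s0, hs0.1⟩
        · left
          have hnm : ¬ BMatched ms b' := by
            rintro ⟨s0, hs0⟩; rw [hmsM] at hs0; exact hm ⟨s0, hs0⟩
          refine ⟨hnm, ?_⟩
          rw [hmsdef, midState_PB, if_pos ?_]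
          by_cases ht : BMatched st b'
          · obtain ⟨s0, hs0⟩ := ht
            refine Or.inl ⟨s0, ?_⟩
            by_contra hns
            exact hm ⟨s0, Finset.mem_sdiff.mpr ⟨hs0, hns⟩⟩
          · exact Or.inr (hUbfull b' ht)
      have sellerCases : ∀ s', (¬ SMatched ms s' ∧ ms.PS s' = 1) ∨
          (SMatched ms s' ∧ ms.PS s' = st.PS s') := by
        intro s'
        by_cases hm : ∃ b2, (b2, s') ∈ st.M \ Rp
        · right
          obtain ⟨b0, hb0⟩ := hm
          rw [Finset.mem_sdiff] at hb0
          refine ⟨⟨b0, by rw [hmsM, Finset.mem_sdiff]; exact hb0⟩, ?_⟩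
          rw [hmsdef, midState_PS, if_neg ?_]
          rintro (⟨b2, hb2⟩ | hUs')
          · have hd : (b2, s') = (b0, s') := hinjS _ (h1 hb2) _ hb0.1 rfl
            rw [hd] at hb2
            exact hb0.2 hb2
          · exact h4 s' hUs' ⟨b0, hb0.1⟩
        · left
          have hnm : ¬ SMatched ms s' := by
            rintro ⟨b0, hb0⟩; rw [hmsM] at hb0; exact hm ⟨b0, hb0⟩
          refine ⟨hnm, ?_⟩
          rw [hmsdef, midState_PS, if_pos ?_]
          by_cases ht : SMatched st s'
          · obtain ⟨b0, hb0⟩ := ht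
            refine Or.inl ⟨b0, ?_⟩
            by_contra hns
            exact hm ⟨b0, Finset.mem_sdiff.mpr ⟨hb0, hns⟩⟩
          · exact Or.inr (hUsfull s' ht)
      have matchedPSge : ∀ s', SMatched ms s' → st.PB b ≤ st.PS s' := by
        rintro s' ⟨b0, hb0⟩
        rw [hmsM, Finset.mem_sdiff] at hb0
        have h2' : st.PB (b, s).1 ≤ st.PB (b0, s').1 := h2 _ hb0.1 hb0.2 _ hqRp
        have heq' : st.PB (b0, s').1 = st.PS (b0, s').2 := heq _ hb0.1
        exact le_trans h2' (le_of_eq heq')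
      have hBIO : BuyIncrOK Mk ε ms b (st.PB b) := by
        constructor
        · intro s' he
          rcases sellerCases s' with ⟨_, hv⟩ | ⟨_, hv⟩
          · rw [hv]; linarith
          · rw [hv]
            have h' : st.PB b - st.PS s' ≤ ε := heps (b, s') he
            linarith
        · intro s' he hnm
          rcases sellerCases s' with ⟨_, hv⟩ | ⟨hm, _⟩
          · rw [hv]; exact hp1
          · exact absurd hm hnm
      have hEqGen : ∀ X : MState B S, X.PS = ms.PS → X.M = ms.M →
          (∀ b', b' ≠ b → X.PB b' = ms.PB b') →
          matchPair X b s (st.PB b) = midState st (Rp.erase (b, s)) Ub Us := by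
        intro X hXS hXM hXB
        refine mstate_ext ?_ ?_ ?_
        · funext b'
          show Function.update X.PB b (st.PB b) b' = _
          by_cases hbb : b' = b
          · rw [hbb, Function.update_self, midState_PB, if_neg ?_]
            rintro (⟨s2, hs2⟩ | hUb')
            · have hs2' := Finset.mem_of_mem_erase hs2
              have hd : (b, s2) = (b, s) := hinjB _ (h1 hs2') _ hqM rfl
              rw [hd] at hs2
              exact (Finset.notMem_erase _ _) hs2
            · exact h3 _ hUb' ⟨s, hqM⟩
          · rw [Function.update_of_ne hbb, hXB _ hbb, hmsdef, midState_PB, midState_PB]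
            have hiff : (∃ s2, (b', s2) ∈ Rp.erase (b, s)) ↔ (∃ s2, (b', s2) ∈ Rp) := by
              constructor
              · rintro ⟨s2, h⟩; exact ⟨s2, Finset.mem_of_mem_erase h⟩
              · rintro ⟨s2, h⟩
                exact ⟨s2, Finset.mem_erase.mpr
                  ⟨fun hc => hbb (congrArg Prod.fst hc), h⟩⟩
            simp only [hiff]
        · funext s'
          show Function.update X.PS s (st.PB b) s' = _
          by_cases hss : s' = s
          · rw [hss, Function.update_self, midState_PS, if_neg ?_]
            · exact hps.symm
            · rintro (⟨b2, hb2⟩ | hUs')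
              · have hb2' := Finset.mem_of_mem_erase hb2
                have hd : (b2, s) = (b, s) := hinjS _ (h1 hb2') _ hqM rfl
                rw [hd] at hb2
                exact (Finset.notMem_erase _ _) hb2
              · exact h4 _ hUs' ⟨b, hqM⟩
          · rw [Function.update_of_ne hss, hXS, hmsdef, midState_PS, midState_PS]
            have hiff : (∃ b2, (b2, s') ∈ Rp.erase (b, s)) ↔ (∃ b2, (b2, s') ∈ Rp) := by
              constructor
              · rintro ⟨b2, h⟩; exact ⟨b2, Finset.mem_of_mem_erase h⟩
              · rintro ⟨b2, h⟩
                exact ⟨b2, Finset.mem_erase.mpr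
                  ⟨fun hc => hss (congrArg Prod.snd hc), h⟩⟩
            simp only [hiff]
        · show insert (b, s) (X.M.filter fun p => p.1 ≠ b ∧ p.2 ≠ s) = _
          rw [hXM, hmsM, midState_M]
          ext x
          simp only [Finset.mem_insert, Finset.mem_filter, Finset.mem_sdiff,
            Finset.mem_erase]
          constructor
          · rintro (rfl | ⟨⟨hxM, hxR⟩, hx1, hx2⟩)
            · exact ⟨hqM, fun hc => (hc.1 rfl).elim⟩
            · exact ⟨hxM, fun hc => hxR hc.2⟩
          · rintro ⟨hxM, hc⟩
            by_cases hx : x = (b, s)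
            · exact Or.inl hx
            · right
              have hxR : x ∉ Rp := fun h => hc ⟨hx, h⟩
              refine ⟨⟨hxM, hxR⟩, ?_, ?_⟩
              · intro h1'
                exact hx (hinjB _ hxM _ hqM h1')
              · intro h2'
                exact hx (hinjS _ hxM _ hqM h2')
      have sellStep : ∀ X : MState B S, X.PS = ms.PS → X.M = ms.M →
          (∀ b', (b' = b ∧ X.PB b' = st.PB b) ∨ X.PB b' = ms.PB b') →
          st.PB b ≤ X.PB b →
          Step Mk ε X (matchPair X b s (st.PB b)) := by
        intro X hXS hXM hX hXb
        have hXbm : ¬ BMatched X b := by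
          rintro ⟨s0, hs0⟩; rw [hXM] at hs0; exact hbnm ⟨s0, hs0⟩
        refine Step.sellMatch X s (st.PB b) b ?_ ?_ hvSp (hmulB b) ?_ ?_ ?_
        · rintro ⟨b', hb'⟩; rw [hXM] at hb'; exact hsnm ⟨b', hb'⟩
        · rw [hXS, hsPS]; exact hp1
        · constructor
          · intro b' he
            rcases hX b' with ⟨_, hv⟩ | hv
            · rw [hv]; linarith
            · rw [hv]
              rcases buyerCases b' with ⟨_, hv2⟩ | ⟨_, hv2⟩
              · rw [hv2]; linarith
              · rw [hv2]
                have h' : st.PB b' - st.PS s ≤ ε := heps (b', s) he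
                rw [hps] at h'
                linarith
          · intro b' he hnm
            rcases hX b' with ⟨_, hv⟩ | hv
            · exact le_of_eq hv
            · rw [hv]
              rcases buyerCases b' with ⟨_, hv2⟩ | ⟨hm, _⟩
              · rw [hv2]; exact hp0
              · obtain ⟨s0, hs0⟩ := hm
                rw [← hXM] at hs0
                exact absurd ⟨s0, hs0⟩ hnm
        · exact ⟨hqE, Or.inl ⟨hXbm, hXb⟩⟩
        · exact fun _ => hXbm
      have hcard := Finset.card_erase_of_mem hqRp
      have hcp : 0 < Rp.card := Finset.card_pos.mpr ⟨(b, s), hqRp⟩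
      have hrec := ih (Rp.erase (b, s)) Ub Us (by omega)
        (fun x hx => h1 (Finset.mem_of_mem_erase hx))
        (by
          intro q0 hq0 hq0n q' hq'
          by_cases hq0R : q0 ∈ Rp
          · have hq0e : q0 = (b, s) := by
              by_contra hne
              exact hq0n (Finset.mem_erase.mpr ⟨hne, hq0R⟩)
            rw [hq0e]
            exact hqmax q' (Finset.mem_of_mem_erase hq')
          · exact h2 q0 hq0 hq0R q' (Finset.mem_of_mem_erase hq'))
        h3 h4 (fun _ => hUbfull) (fun _ => hUsfull)
      by_cases hpe1 : st.PB b = 1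
      · -- one buyMatch move
        have hstep : Step Mk ε ms (matchPair ms b s (st.PB b)) := by
          refine Step.buyMatch ms b (st.PB b) s hbnm ?_ hpvB (hmulB b) hBIO ?_ ?_
          · rw [hbPB]; exact hp0
          · exact ⟨hqE, Or.inl ⟨hsnm, le_of_eq (by rw [hsPS, hpe1])⟩⟩
          · exact fun _ => hsnm
        rw [hEqGen ms rfl rfl (fun _ _ => rfl)] at hstep
        exact reachLe_mono (reachLe_cons hstep hrec) (by omega)
      · by_cases hpe0 : st.PB b = 0
        · -- one sellMatch move
          have hstep := sellStep ms rfl rfl (fun b' => Or.inr rfl)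
            (by rw [hbPB, hpe0])
          rw [hEqGen ms rfl rfl (fun _ _ => rfl)] at hstep
          exact reachLe_mono (reachLe_cons hstep hrec) (by omega)
        · -- buyBid then sellMatch
          have hplt : st.PB b < 1 := lt_of_le_of_ne hp1 hpe1
          have hpgt : 0 < st.PB b := lt_of_le_of_ne hp0 (Ne.symm hpe0)
          have hstep1 : Step Mk ε ms
              ⟨Function.update ms.PB b (st.PB b), ms.PS, ms.M⟩ := by
            refine Step.buyBid ms b (st.PB b) hbnm ?_ hpvB (hmulB b) hBIO ?_
            · rw [hbPB]; exact hpgt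
            · rintro s' ⟨he, hcase⟩
              rcases sellerCases s' with ⟨hnm', hv⟩ | ⟨hm', hv⟩
              · rcases hcase with ⟨_, hle⟩ | ⟨hm2, _⟩
                · rw [hv] at hle; linarith
                · exact absurd hm2 hnm'
              · rcases hcase with ⟨hnm2, _⟩ | ⟨_, hle⟩
                · exact absurd hm' hnm2
                · rw [hv] at hle
                  have := matchedPSge s' hm'
                  linarith
          have hstep2 := sellStep ⟨Function.update ms.PB b (st.PB b), ms.PS, ms.M⟩
            rfl rfl
            (fun b' => by
              by_cases hbb : b' = b
              · subst hbb
                exact Or.inl ⟨rfl, Function.update_self _ _ _⟩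
              · exact Or.inr (Function.update_of_ne hbb _ _))
            (by simp)
          rw [hEqGen ⟨Function.update ms.PB b (st.PB b), ms.PS, ms.M⟩ rfl rfl
            (fun b' hbb => by
              show Function.update ms.PB b (st.PB b) b' = ms.PB b'
              exact Function.update_of_ne hbb _ _)] at hstep2
          exact reachLe_mono (reachLe_cons hstep1 (reachLe_cons hstep2 hrec)) (by omega)
/-- any well-behaved ε-stable state is reachable from the zero-information
state by a sequence of at most `n` legal moves of the DOA mechanism. -/
theorem well_behaved_eps_stable_reachable
    (Mk : Market B S) (ε : ℝ) (hε : 0 < ε)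
    (st : MState B S) (hvalid : ValidState Mk st)
    (hstable : IsEpsStable Mk ε st) (hwb : WellBehaved Mk st)
    (hmulB : ∀ b, MulEps ε (st.PB b)) (hmulS : ∀ s, MulEps ε (st.PS s)) :
    ∃ (k : ℕ) (f : ℕ → MState B S), k ≤ Fintype.card B + Fintype.card S ∧
      f 0 = zeroInfoState B S ∧ f k = st ∧
      ∀ i < k, Step Mk ε (f i) (f (i + 1)) := by
  classical
  have hinjB := hvalid.1.2.1
  have hinjS := hvalid.1.2.2
  have hreach := midReach Mk ε hε st hvalid hstable hwb hmulB hmulS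
    (2 * st.M.card + (Finset.univ.filter (fun b => ¬ BMatched st b)).card
      + (Finset.univ.filter (fun s => ¬ SMatched st s)).card)
    st.M (Finset.univ.filter (fun b => ¬ BMatched st b))
    (Finset.univ.filter (fun s => ¬ SMatched st s))
    le_rfl (subset_refl _)
    (fun q hq hnq _ _ => absurd hq hnq)
    (fun b hb => (Finset.mem_filter.mp hb).2)
    (fun s hs => (Finset.mem_filter.mp hs).2)
    (fun _ b hb => Finset.mem_filter.mpr ⟨Finset.mem_univ b, hb⟩)
    (fun _ s hs => Finset.mem_filter.mpr ⟨Finset.mem_univ s, hs⟩)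
  have hzero : midState st st.M (Finset.univ.filter (fun b => ¬ BMatched st b))
      (Finset.univ.filter (fun s => ¬ SMatched st s)) = zeroInfoState B S := by
    refine mstate_ext ?_ ?_ ?_
    · funext b
      have hc : (∃ s, (b, s) ∈ st.M) ∨
          b ∈ Finset.univ.filter (fun b => ¬ BMatched st b) := by
        by_cases hb : BMatched st b
        · exact Or.inl hb
        · exact Or.inr (Finset.mem_filter.mpr ⟨Finset.mem_univ b, hb⟩)
      rw [midState_PB, if_pos hc]
      rfl
    · funext s
      have hc : (∃ b, (b, s) ∈ st.M) ∨
          s ∈ Finset.univ.filter (fun s => ¬ SMatched st s) := by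
        by_cases hs : SMatched st s
        · exact Or.inl hs
        · exact Or.inr (Finset.mem_filter.mpr ⟨Finset.mem_univ s, hs⟩)
      rw [midState_PS, if_pos hc]
      rfl
    · rw [midState_M, Finset.sdiff_self]
      rfl
  rw [hzero] at hreach
  -- cardinality bookkeeping
  have hMB : st.M.card ≤ (Finset.univ.filter (fun b => BMatched st b)).card := by
    rw [← Finset.card_image_of_injOn (f := Prod.fst)
      (fun p hp q hq h => hinjB p hp q hq h)]
    apply Finset.card_le_card
    intro b hb
    obtain ⟨p, hp, rfl⟩ := Finset.mem_image.mp hb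
    exact Finset.mem_filter.mpr ⟨Finset.mem_univ _, ⟨p.2, by simpa using hp⟩⟩
  have hMS : st.M.card ≤ (Finset.univ.filter (fun s => SMatched st s)).card := by
    rw [← Finset.card_image_of_injOn (f := Prod.snd)
      (fun p hp q hq h => hinjS p hp q hq h)]
    apply Finset.card_le_card
    intro s hs
    obtain ⟨p, hp, rfl⟩ := Finset.mem_image.mp hs
    exact Finset.mem_filter.mpr ⟨Finset.mem_univ _, ⟨p.1, by simpa using hp⟩⟩
  have hsplitB := Finset.card_filter_add_card_filter_not
    (s := (Finset.univ : Finset B)) (p := fun b => BMatched st b)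
  have hsplitS := Finset.card_filter_add_card_filter_not
    (s := (Finset.univ : Finset S)) (p := fun s => SMatched st s)
  rw [Finset.card_univ] at hsplitB hsplitS
  obtain ⟨k, hk, f, hf0, hfk, hsteps⟩ := hreach
  exact ⟨k, f, by omega, hf0, hfk, hsteps⟩
end

section
/- There exists a market on a bipartite trading graph (an 8-cycle with 4 buyers of valuation 1 and 4 sellers of valuation 0) and an infinite sequence of legal moves of the deterministic double-oral-auction mechanism with increment ε that never converges: the sequence of states is eventually periodic up to a graph automorphism, returning to an isomorphic state every 2 steps. -/
open Finset

variable {B S : Type*} [Fintype B] [Fintype S]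

variable [DecidableEq B] [DecidableEq S]

/-- Apply a pair of agent permutations to a market state. -/
def mapState [DecidableEq B] [DecidableEq S]
    (σB : Equiv.Perm B) (σS : Equiv.Perm S) (st : MState B S) : MState B S where
  PB := st.PB ∘ σB.symm
  PS := st.PS ∘ σS.symm
  M := st.M.image fun p => (σB p.1, σS p.2)

namespace DOACycle

instance {st : MState (Fin 4) (Fin 4)} {s : Fin 4} : Decidable (SMatched st s) := by
  unfold SMatched; infer_instance

instance {st : MState (Fin 4) (Fin 4)} {b : Fin 4} : Decidable (BMatched st b) := by
  unfold BMatched; infer_instance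

lemma MState.ext' {B S : Type*} {x y : MState B S}
    (h1 : x.PB = y.PB) (h2 : x.PS = y.PS) (h3 : x.M = y.M) : x = y := by
  cases x; cases y; cases h1; cases h2; cases h3; rfl

noncomputable def myMk : Market (Fin 4) (Fin 4) where
  E := Finset.univ.filter (fun p : Fin 4 × Fin 4 => p.1 = p.2 ∨ p.1 = p.2 + 1)
  valB := fun _ => 1
  valS := fun _ => 0
  valB_nonneg := fun _ => zero_le_one
  valB_le_one := fun _ => le_refl 1
  valS_nonneg := fun _ => le_refl 0
  valS_le_one := fun _ => zero_le_one

noncomputable def stA (k : Fin 4) : MState (Fin 4) (Fin 4) :=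
  ⟨fun b => if b = k + 3 then 3/4 else 5/8,
   fun s => if s = k ∨ s = k + 1 then 5/8 else 3/4,
   {(k+1, k), (k+2, k+1), (k+3, k+3)}⟩

noncomputable def stB (k : Fin 4) : MState (Fin 4) (Fin 4) :=
  ⟨fun b => if b = k ∨ b = k + 3 then 3/4 else 5/8,
   fun s => if s = k + 1 then 5/8 else 3/4,
   {(k, k), (k+2, k+1), (k+3, k+3)}⟩

lemma step1 (k : Fin 4) : Step myMk (1/8) (stA k) (stB k) := by
  have hk3 : ∀ k : Fin 4, k ≠ k + 3 := by decide
  have hallS : ∀ k s : Fin 4, (k, s) ∈ myMk.E → SMatched (stA k) s := by decide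
  have hBM : ∀ k : Fin 4, ¬ BMatched (stA k) k := by decide
  have hEkk : ∀ k : Fin 4, (k, k) ∈ myMk.E := by decide
  have hSM : ∀ k : Fin 4, SMatched (stA k) k := by decide
  have hm : stB k = matchPair (stA k) k k (3/4) := by
    refine MState.ext' ?_ ?_ ?_
    · funext b
      fin_cases k <;> fin_cases b <;>
        simp [stA, stB, matchPair, Function.update_apply]
    · funext s
      fin_cases k <;> fin_cases s <;>
        simp [stA, stB, matchPair, Function.update_apply]
    · fin_cases k <;> decide
  rw [hm]
  refine Step.buyMatch (stA k) k (3/4) k (hBM k) ?_ ?_ ⟨6, by norm_num⟩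
    ⟨?_, ?_⟩ ⟨hEkk k, Or.inr ⟨hSM k, ?_⟩⟩ ?_
  · simp only [stA, if_neg (hk3 k)]; norm_num
  · show (3/4 : ℝ) ≤ myMk.valB k; norm_num [myMk]
  · intro s _; simp only [stA]; split <;> norm_num
  · intro s hs hn; exact absurd (hallS k s hs) hn
  · have : (stA k).PS k = 5/8 := by simp [stA]
    rw [this]; norm_num
  · rintro ⟨s₀, hint, hn⟩ _
    simp only [SellerInterested] at hint
    exact hn (hallS k s₀ hint.1)

lemma step2 (k : Fin 4) : Step myMk (1/8) (stB k) (stA (k+1)) := by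
  have hallB : ∀ k b : Fin 4, (b, k + 2) ∈ myMk.E → BMatched (stB k) b := by decide
  have hSM : ∀ k : Fin 4, ¬ SMatched (stB k) (k + 2) := by decide
  have hE32 : ∀ k : Fin 4, (k + 3, k + 2) ∈ myMk.E := by decide
  have hBM : ∀ k : Fin 4, BMatched (stB k) (k + 3) := by decide
  have hm : stA (k+1) = matchPair (stB k) (k+3) (k+2) (5/8) := by
    refine MState.ext' ?_ ?_ ?_
    · funext b
      fin_cases k <;> fin_cases b <;>
        simp [stA, stB, matchPair, Function.update_apply]
    · funext s
      fin_cases k <;> fin_cases s <;>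
        simp [stA, stB, matchPair, Function.update_apply]
    · fin_cases k <;> decide
  rw [hm]
  refine Step.sellMatch (stB k) (k+2) (5/8) (k+3) (hSM k) ?_ ?_ ⟨5, by norm_num⟩
    ⟨?_, ?_⟩ ⟨hE32 k, Or.inr ⟨hBM k, ?_⟩⟩ ?_
  · have h21 : ∀ k : Fin 4, ¬ (k + 2 = k + 1) := by decide
    simp only [stB, if_neg (h21 k)]; norm_num
  · show myMk.valS (k+2) ≤ (5/8 : ℝ); norm_num [myMk]
  · intro b _; simp only [stB]; split <;> norm_num
  · intro b hb hn; exact absurd (hallB k b hb) hn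
  · have : (stB k).PB (k+3) = 3/4 := by simp [stB]
    rw [this]; norm_num
  · rintro ⟨b₀, hint, hn⟩ _
    simp only [BuyerInterested] at hint
    exact hn (hallB k b₀ hint.1)

def rot : Equiv.Perm (Fin 4) :=
  ⟨fun x => x + 1, fun x => x - 1, fun x => by simp, fun x => by simp⟩

lemma mapA (k : Fin 4) : stA (k + 1) = mapState rot rot (stA k) := by
  refine MState.ext' ?_ ?_ ?_
  · funext b; fin_cases k <;> fin_cases b <;> simp (config := { decide := true }) [stA, mapState, rot, Function.comp, Equiv.coe_fn_symm_mk]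
  · funext s; fin_cases k <;> fin_cases s <;> simp (config := { decide := true }) [stA, mapState, rot, Function.comp, Equiv.coe_fn_symm_mk]
  · fin_cases k <;> decide

lemma mapB (k : Fin 4) : stB (k + 1) = mapState rot rot (stB k) := by
  refine MState.ext' ?_ ?_ ?_
  · funext b; fin_cases k <;> fin_cases b <;> simp (config := { decide := true }) [stB, mapState, rot, Function.comp, Equiv.coe_fn_symm_mk]
  · funext s; fin_cases k <;> fin_cases s <;> simp (config := { decide := true }) [stB, mapState, rot, Function.comp, Equiv.coe_fn_symm_mk]
  · fin_cases k <;> decide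

open Fin.NatCast in
noncomputable def f (t : ℕ) : MState (Fin 4) (Fin 4) :=
  if Even t then stA ((t / 2 : ℕ) : Fin 4) else stB ((t / 2 : ℕ) : Fin 4)

open Fin.NatCast in
lemma fstep (t : ℕ) : Step myMk (1/8) (f t) (f (t + 1)) := by
  rcases Nat.even_or_odd t with he | ho
  · have h1 : ¬ Even (t + 1) := by simp [Nat.even_add_one, he]
    have h2 : (t + 1) / 2 = t / 2 := by obtain ⟨m, rfl⟩ := he; omega
    simp only [f, if_pos he, if_neg h1, h2]
    exact step1 _
  · obtain ⟨m, rfl⟩ := ho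
    have h0 : ¬ Even (2 * m + 1) := by simp [Nat.even_add_one]
    have h1 : Even (2 * m + 1 + 1) := ⟨m + 1, by ring⟩
    have h2 : (2 * m + 1 + 1) / 2 = (2 * m + 1) / 2 + 1 := by omega
    simp only [f, if_neg h0, if_pos h1, h2, Nat.cast_add, Nat.cast_one]
    exact step2 _

lemma notA (k : Fin 4) : ¬ IsEpsStable myMk (1/8) (stA k) := by
  have hu : ∀ k : Fin 4, ¬ BMatched (stA k) k := by decide
  intro h
  have := h.2.1 k (hu k)
  have hk3 : ∀ k : Fin 4, k ≠ k + 3 := by decide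
  simp only [stA, if_neg (hk3 k), myMk] at this
  norm_num at this

lemma notB (k : Fin 4) : ¬ IsEpsStable myMk (1/8) (stB k) := by
  have hu : ∀ k : Fin 4, ¬ SMatched (stB k) (k + 2) := by decide
  intro h
  have := h.2.2.1 (k + 2) (hu k)
  have h21 : ∀ k : Fin 4, ¬ (k + 2 = k + 1) := by decide
  simp only [stB, if_neg (h21 k), myMk] at this
  norm_num at this

lemma vstart : ValidStart myMk (1/8) (stA 0) := by
  have hM : IsMatching myMk (stA 0).M := by unfold IsMatching; decide
  refine ⟨⟨hM, ?_, ?_, ?_⟩, ?_, ?_, ?_, ?_, ?_⟩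
  · intro b; fin_cases b <;> simp (config := { decide := true }) [stA, myMk] <;> norm_num
  · intro s; fin_cases s <;> simp (config := { decide := true }) [stA, myMk] <;> norm_num
  · intro p hp; fin_cases hp <;> simp (config := { decide := true }) [stA] <;> norm_num
  · intro p hp; fin_cases p <;> simp_all (config := { decide := true }) [stA, myMk] <;> norm_num
  · intro b; fin_cases b <;> simp (config := { decide := true }) [stA] <;> norm_num
  · intro s; fin_cases s <;> simp (config := { decide := true }) [stA] <;> norm_num
  · intro b; fin_cases b <;>
      first
        | (refine ⟨5, ?_⟩; simp (config := { decide := true }) [stA] <;> norm_num <;> done)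
        | (refine ⟨6, ?_⟩; simp (config := { decide := true }) [stA] <;> norm_num <;> done)
  · intro s; fin_cases s <;>
      first
        | (refine ⟨5, ?_⟩; simp (config := { decide := true }) [stA] <;> norm_num <;> done)
        | (refine ⟨6, ?_⟩; simp (config := { decide := true }) [stA] <;> norm_num <;> done)

end DOACycle

open DOACycle in
open Fin.NatCast in

/-- there is a market on an 8-cycle trading graph (4 buyers of valuation 1
and 4 sellers of valuation 0) together with an infinite sequence of legal moves of the
deterministic DOA mechanism, starting from a state reachable from a valid starting state,
that never reaches an ε-stable state; the run is periodic up to a valuation- and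
edge-preserving graph automorphism, returning to an isomorphic state every 2 steps. -/
theorem doa_may_cycle_on_incomplete_graphs :
    ∃ (Mk : Market (Fin 4) (Fin 4)) (ε : ℝ), 0 < ε ∧
      Mk.E = Finset.univ.filter (fun p : Fin 4 × Fin 4 => p.1 = p.2 ∨ p.1 = p.2 + 1) ∧
      (∀ b, Mk.valB b = 1) ∧ (∀ s, Mk.valS s = 0) ∧
      ∃ (f : ℕ → MState (Fin 4) (Fin 4)) (st₀ : MState (Fin 4) (Fin 4)),
        ValidStart Mk ε st₀ ∧ Reachable Mk ε st₀ (f 0) ∧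
        (∀ t, Step Mk ε (f t) (f (t + 1))) ∧
        (∀ t, ¬ IsEpsStable Mk ε (f t)) ∧
        ∃ (σB σS : Equiv.Perm (Fin 4)),
          (∀ p : Fin 4 × Fin 4, p ∈ Mk.E ↔ (σB p.1, σS p.2) ∈ Mk.E) ∧
          (∀ b, Mk.valB (σB b) = Mk.valB b) ∧ (∀ s, Mk.valS (σS s) = Mk.valS s) ∧
          ∀ t, f (t + 2) = mapState σB σS (f t) := by
  refine ⟨myMk, 1/8, by norm_num, rfl, fun _ => rfl, fun _ => rfl, f, f 0, ?_,
    Relation.ReflTransGen.refl, fstep, ?_, rot, rot, by decide, fun _ => rfl, fun _ => rfl, ?_⟩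
  · have h0 : f 0 = stA 0 := by simp [f]
    rw [h0]; exact vstart
  · intro t
    unfold f
    split
    · exact notA _
    · exact notB _
  · intro t
    have h2 : Even (t + 2) ↔ Even t := by simp [Nat.even_add]
    have hd : (t + 2) / 2 = t / 2 + 1 := by omega
    by_cases h : Even t
    · simp only [f, if_pos h, if_pos (h2.mpr h), hd, Nat.cast_add, Nat.cast_one]
      exact mapA _
    · simp only [f, if_neg h, if_neg (fun hh => h (h2.mp hh)), hd, Nat.cast_add, Nat.cast_one]
      exact mapB _
end
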